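/- Let H be a real Hilbert space, let C ⊆ H be a nonempty closed convex subset, and let T : C → C be a mapping for which there exist k ∈ [0, ∞) and a ∈ [0, 1/2) such that ‖k(x−y) + Tx − Ty‖ ≤ a·(‖x − Tx‖ + ‖y − Ty‖) for all x, y ∈ C. Then T has a unique fixed point x* ∈ C, and with λ = 1/(k+1) the iterative algorithm xₙ₊₁ = (1−λ)xₙ + λT xₙ converges strongly to x* for any x₀ ∈ C. -/

import Mathlib

/-- Krasnoselskij projection-type algorithm for `(k, a)`-enriched Kannan
mappings on a nonempty closed convex subset `C` of a real Hilbert space: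
`T` has a unique fixed point `x* ∈ C` and, with `λ = 1/(k+1)`, the iteration
`xₙ₊₁ = (1−λ)xₙ + λ T xₙ` converges strongly to `x*` for any `x₀ ∈ C`. -/
theorem enrichedKannan_krasnoselskij_hilbert
    {H : Type*} [NormedAddCommGroup H] [InnerProductSpace ℝ H] [CompleteSpace H]
    (C : Set H) (hC : IsClosed C) (hCc : Convex ℝ C) (hCne : C.Nonempty)
    (T : H → H) (hTC : ∀ x ∈ C, T x ∈ C)
    (k a : ℝ) (hk : 0 ≤ k) (ha0 : 0 ≤ a) (ha : a < 1 / 2)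
    (hT : ∀ x ∈ C, ∀ y ∈ C,
      ‖k • (x - y) + (T x - T y)‖ ≤ a * (‖x - T x‖ + ‖y - T y‖)) :
    ∃ p : H, p ∈ C ∧ T p = p ∧ (∀ q ∈ C, T q = q → q = p) ∧
      ∀ x : ℕ → H, x 0 ∈ C →
        (∀ n : ℕ, x (n + 1) = (1 - 1 / (k + 1)) • x n + (1 / (k + 1)) • T (x n)) →
        Filter.Tendsto x Filter.atTop (nhds p) := by
  have hk1 : (0:ℝ) < k + 1 := by linarith
  set l : ℝ := 1 / (k + 1) with hl_def
  have hl0 : 0 < l := by positivity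
  have hl1 : l ≤ 1 := by rw [hl_def, div_le_one hk1]; linarith
  have hkl : 1 - l = k * l := by rw [hl_def]; field_simp; ring
  set S : H → H := fun x => (1 - l) • x + l • T x with hS_def
  have hSC : ∀ x ∈ C, S x ∈ C := fun x hx =>
    hCc hx (hTC x hx) (by linarith) hl0.le (by ring)
  have hdiff : ∀ x y : H, S x - S y = l • (k • (x - y) + (T x - T y)) := by
    intro x y
    simp only [hS_def]
    rw [show (1 : ℝ) - l = k * l from hkl]
    module
  have hxSx : ∀ x : H, x - S x = l • (x - T x) := by
    intro x
    simp only [hS_def]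
    rw [show (1 : ℝ) - l = k * l from hkl]
    have : k * l + l = 1 := by rw [← hkl]; ring
    rw [show (k * l : ℝ) = 1 - l from hkl.symm]
    module
  have hKannan : ∀ x ∈ C, ∀ y ∈ C, ‖S x - S y‖ ≤ a * (‖x - S x‖ + ‖y - S y‖) := by
    intro x hx y hy
    rw [hdiff, hxSx, hxSx, norm_smul, norm_smul, norm_smul, Real.norm_eq_abs,
      abs_of_pos hl0]
    have := hT x hx y hy
    nlinarith [norm_nonneg (x - T x), norm_nonneg (y - T y)]
  have h1a : 0 < 1 - a := by linarith
  set c : ℝ := a / (1 - a) with hc_def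
  have hc0 : 0 ≤ c := by positivity
  have hc1 : c < 1 := by rw [hc_def, div_lt_one h1a]; linarith
  have hstep : ∀ x ∈ C, ‖S x - S (S x)‖ ≤ c * ‖x - S x‖ := by
    intro x hx
    have h := hKannan x hx (S x) (hSC x hx)
    rw [hc_def, div_mul_eq_mul_div, le_div_iff₀ h1a]
    nlinarith [norm_nonneg (x - S x), norm_nonneg (S x - S (S x))]
  -- key: any Picard sequence for S starting in C converges to a fixed point of S in C
  have key : ∀ x : ℕ → H, x 0 ∈ C → (∀ n, x (n + 1) = S (x n)) →
      ∃ q ∈ C, S q = q ∧ Filter.Tendsto x Filter.atTop (nhds q) := by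
    intro x hx0 hrec
    have memC : ∀ n, x n ∈ C := by
      intro n; induction n with
      | zero => exact hx0
      | succ n ih => rw [hrec]; exact hSC _ ih
    set d : ℕ → ℝ := fun n => ‖x n - x (n + 1)‖ with hd_def
    have hd : ∀ n, d (n + 1) ≤ c * d n := by
      intro n
      have := hstep (x n) (memC n)
      simpa [hd_def, hrec n, hrec (n + 1)] using this
    have hgeo : ∀ n, d n ≤ d 0 * c ^ n := by
      intro n; induction n with
      | zero => simp
      | succ n ih =>
        calc d (n + 1) ≤ c * d n := hd n
        _ ≤ c * (d 0 * c ^ n) := by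
            exact mul_le_mul_of_nonneg_left ih hc0
        _ = d 0 * c ^ (n + 1) := by ring
    have hcauchy : CauchySeq x := by
      apply cauchySeq_of_le_geometric c (d 0) hc1
      intro n
      rw [dist_eq_norm]
      simpa [mul_comm] using hgeo n
    obtain ⟨q, hq⟩ := cauchySeq_tendsto_of_complete hcauchy
    have hqC : q ∈ C := hC.mem_of_tendsto hq (Filter.Eventually.of_forall memC)
    have hd0 : Filter.Tendsto d Filter.atTop (nhds 0) := by
      apply squeeze_zero (fun n => norm_nonneg _) hgeo
      simpa using (tendsto_pow_atTop_nhds_zero_of_lt_one hc0 hc1).const_mul (d 0)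
    have h1 : Filter.Tendsto (fun n => ‖x (n + 1) - S q‖) Filter.atTop
        (nhds ‖q - S q‖) := by
      have hx1 : Filter.Tendsto (fun n => x (n + 1)) Filter.atTop (nhds q) :=
        hq.comp (Filter.tendsto_add_atTop_nat 1)
      exact (hx1.sub tendsto_const_nhds).norm
    have h3 : Filter.Tendsto (fun n => a * (d n + ‖q - S q‖)) Filter.atTop
        (nhds (a * (0 + ‖q - S q‖))) :=
      ((hd0.add tendsto_const_nhds).const_mul a)
    have h2 : ∀ n, ‖x (n + 1) - S q‖ ≤ a * (d n + ‖q - S q‖) := by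
      intro n
      have := hKannan (x n) (memC n) q hqC
      simpa [hrec n, hd_def] using this
    have hfin : ‖q - S q‖ ≤ a * (0 + ‖q - S q‖) :=
      le_of_tendsto_of_tendsto' h1 h3 h2
    have hfix : S q = q := by
      have : ‖q - S q‖ = 0 := by nlinarith [norm_nonneg (q - S q)]
      have := norm_sub_eq_zero_iff.mp this
      exact this.symm
    exact ⟨q, hqC, hfix, hq⟩
  -- build the fixed point from an arbitrary starting point
  obtain ⟨x0, hx0⟩ := hCne
  obtain ⟨p, hpC, hpfix, -⟩ := key (fun n => S^[n] x0) (by simpa using hx0)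
    (fun n => Function.iterate_succ_apply' S n x0)
  have hSfix_iff : ∀ z : H, S z = z ↔ T z = z := by
    intro z
    constructor
    · intro h
      have h2 : z - S z = 0 := by rw [h, sub_self]
      rw [hxSx z] at h2
      have := (smul_eq_zero.mp h2).resolve_left (ne_of_gt hl0)
      have := sub_eq_zero.mp this
      exact this.symm
    · intro h
      simp only [hS_def, h]
      module
  have hTp : T p = p := (hSfix_iff p).mp hpfix
  have huniq : ∀ q ∈ C, T q = q → q = p := by
    intro q hqC hTq
    have hSq : S q = q := (hSfix_iff q).mpr hTq
    have h := hKannan q hqC p hpC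
    rw [hSq, hpfix] at h
    simp only [sub_self, norm_zero] at h
    have h' : ‖q - p‖ ≤ 0 := by linarith [h]
    exact norm_sub_eq_zero_iff.mp (le_antisymm h' (norm_nonneg _))
  refine ⟨p, hpC, hTp, huniq, ?_⟩
  intro x hx0' hrec
  obtain ⟨q, hqC, hqfix, hqt⟩ := key x hx0' (fun n => by rw [hrec n])
  have : q = p := huniq q hqC ((hSfix_iff q).mp hqfix)
  rwa [this] at hqt
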